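/- arXiv:1907.01065 — 2 statements merged into one kernel-verified Lean document; each statement's English description precedes it below -/
import Mathlib

section
/- Let $\gamma > 1$, $\delta > 0$, and let $\accentset{\circ}{\rho} : [0,1] \to \mathbb{R}$ be continuous on $[0,1]$, $C^1$ on $[0,1)$, positive on $[0,1)$, with $\accentset{\circ}{\rho}(1) = 0$, and suppose there exists $\sigma > 0$ and $L \in (0,\infty)$ such that $\lim_{r \to 1^-} (1-r)^{-\sigma} \accentset{\circ}{\rho}(r) = L$. Define $E(r) = \delta \int_r^1 \ell \, \accentset{\circ}{\rho}(\ell) \, d\ell / \accentset{\circ}{\rho}(r)^{\gamma}$ for $r \in [0,1)$. Then $0 < E(r) < \infty$ for all $r \in [0,1)$, and $\lim_{r \to 1^-} E(r)$ equals $\infty$ if $\sigma(\gamma-1) > 1$, equals $\delta L^{1-\gamma}/(\sigma\gamma)$ if $\sigma(\gamma-1) = 1$, and equals $0$ if $\sigma(\gamma-1) < 1$. -/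
open Set Filter MeasureTheory intervalIntegral Topology

theorem entropy_limit (γ δ σ L : ℝ) (hγ : 1 < γ) (hδ : 0 < δ) (hσ : 0 < σ) (hL : 0 < L)
    (ρ : ℝ → ℝ)
    (hcont : ContinuousOn ρ (Icc 0 1))
    (hC1 : ContDiffOn ℝ 1 ρ (Ico 0 1))
    (hpos : ∀ r ∈ Ico (0:ℝ) 1, 0 < ρ r)
    (hvac : ρ 1 = 0)
    (hlim : Tendsto (fun r => (1 - r) ^ (-σ) * ρ r) (nhdsWithin 1 (Iio 1)) (nhds L))
    (E : ℝ → ℝ)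
    (hE : ∀ r ∈ Ico (0:ℝ) 1, E r = δ * (∫ ℓ in r..1, ℓ * ρ ℓ) / (ρ r) ^ γ) :
    (∀ r ∈ Ico (0:ℝ) 1, 0 < E r) ∧
    (1 < σ * (γ - 1) → Tendsto E (nhdsWithin 1 (Iio 1)) atTop) ∧
    (σ * (γ - 1) = 1 → Tendsto E (nhdsWithin 1 (Iio 1)) (nhds (δ * L ^ (1 - γ) / (σ * γ)))) ∧
    (σ * (γ - 1) < 1 → Tendsto E (nhdsWithin 1 (Iio 1)) (nhds 0)) := by
  have hhcont : ContinuousOn (fun ℓ : ℝ => ℓ * ρ ℓ) (Icc 0 1) :=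
    continuousOn_id.mul hcont
  -- interval integrability
  have hint : ∀ r ∈ Icc (0:ℝ) 1, IntervalIntegrable (fun ℓ => ℓ * ρ ℓ) volume r 1 := by
    intro r hr
    apply ContinuousOn.intervalIntegrable
    apply hhcont.mono
    rw [uIcc_of_le hr.2]
    exact Icc_subset_Icc hr.1 le_rfl
  set f : ℝ → ℝ := fun r => ∫ ℓ in r..1, ℓ * ρ ℓ with hfdef
  -- positivity of the integral
  have hIpos : ∀ r ∈ Ico (0:ℝ) 1, 0 < f r := by
    intro r hr
    apply intervalIntegral_pos_of_pos_on (hint r ⟨hr.1, hr.2.le⟩)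
    · intro x hx
      have hx0 : 0 < x := lt_of_le_of_lt hr.1 hx.1
      exact mul_pos hx0 (hpos x ⟨hx0.le, hx.2⟩)
    · exact hr.2
  have hEpos : ∀ r ∈ Ico (0:ℝ) 1, 0 < E r := by
    intro r hr
    rw [hE r hr]
    have h1 := hIpos r hr
    have h2 : (0:ℝ) < ρ r ^ γ := Real.rpow_pos_of_pos (hpos r hr) γ
    positivity
  -- eventually in Ioo 0 1
  have h01 : Ioo (0:ℝ) 1 ∈ 𝓝[<] (1:ℝ) :=
    Ioo_mem_nhdsLT_of_mem (by constructor <;> norm_num)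
  have htsub : Tendsto (fun r : ℝ => 1 - r) (𝓝[<] (1:ℝ)) (𝓝 0) := by
    have hc : Continuous fun r : ℝ => 1 - r := by continuity
    have := (hc.tendsto (1:ℝ)).mono_left (nhdsWithin_le_nhds (s := Iio (1:ℝ)))
    simpa using this
  have hto0 : ∀ e : ℝ, 0 < e →
      Tendsto (fun r : ℝ => (1 - r) ^ e) (𝓝[<] (1:ℝ)) (𝓝 0) := by
    intro e he
    have hc := (Real.continuousAt_rpow_const 0 e (Or.inr he.le)).tendsto
    have := hc.comp htsub
    simpa [Function.comp_def, Real.zero_rpow he.ne'] using this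
  -- L'Hopital setup
  have hff' : ∀ᶠ r in 𝓝[<] (1:ℝ), HasDerivAt f (-(r * ρ r)) r := by
    filter_upwards [h01] with r hr
    have hmeas := ContinuousOn.stronglyMeasurableAtFilter (μ := volume) isOpen_Ioo
      (hhcont.mono Ioo_subset_Icc_self) r hr
    have hca : ContinuousAt (fun ℓ : ℝ => ℓ * ρ ℓ) r :=
      (hhcont.mono Ioo_subset_Icc_self).continuousAt (Ioo_mem_nhds hr.1 hr.2)
    exact integral_hasDerivAt_left (hint r ⟨hr.1.le, hr.2.le⟩) hmeas hca
  have hgg' : ∀ᶠ r in 𝓝[<] (1:ℝ),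
      HasDerivAt (fun r : ℝ => (1 - r) ^ (σ + 1)) (-((σ + 1) * (1 - r) ^ σ)) r := by
    filter_upwards [self_mem_nhdsWithin] with r hr
    have ht : (0:ℝ) < 1 - r := by simp only [mem_Iio] at hr; linarith
    have h1 : HasDerivAt (fun r : ℝ => 1 - r) (-1) r := by
      simpa using (hasDerivAt_id r).const_sub 1
    have h2 := (Real.hasDerivAt_rpow_const (x := 1 - r) (p := σ + 1)
      (Or.inl ht.ne')).comp r h1
    have h3 : (σ + 1) * (1 - r) ^ (σ + 1 - 1) * (-1) = -((σ + 1) * (1 - r) ^ σ) := by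
      rw [add_sub_cancel_right]; ring
    simpa [Function.comp_def, h3] using h2
  have hg'ne : ∀ᶠ r in 𝓝[<] (1:ℝ), -((σ + 1) * (1 - r) ^ σ) ≠ 0 := by
    filter_upwards [self_mem_nhdsWithin] with r hr
    have ht : (0:ℝ) < 1 - r := by simp only [mem_Iio] at hr; linarith
    have h1 := Real.rpow_pos_of_pos ht σ
    have h2 : (0:ℝ) < (σ + 1) * (1 - r) ^ σ := by positivity
    intro h; rw [neg_eq_zero] at h; exact h2.ne' h
  -- f tends to 0
  have hfa : Tendsto f (𝓝[<] (1:ℝ)) (𝓝 0) := by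
    obtain ⟨M, hM⟩ := (isCompact_Icc (a := (0:ℝ)) (b := 1)).exists_bound_of_continuousOn hhcont
    apply squeeze_zero_norm' (a := fun r => M * |1 - r|)
    · filter_upwards [h01] with r hr
      apply intervalIntegral.norm_integral_le_of_norm_le_const
      intro x hx
      rw [uIoc_of_le hr.2.le] at hx
      exact hM x ⟨le_trans hr.1.le hx.1.le, hx.2⟩
    · have hc : Continuous fun r : ℝ => M * |1 - r| := by continuity
      have := (hc.tendsto (1:ℝ)).mono_left (nhdsWithin_le_nhds (s := Iio (1:ℝ)))
      simpa using this
  have hga : Tendsto (fun r : ℝ => (1 - r) ^ (σ + 1)) (𝓝[<] (1:ℝ)) (𝓝 0) :=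
    hto0 (σ + 1) (by linarith)
  -- the derivative quotient limit
  have hdiv : Tendsto (fun r => (-(r * ρ r)) / (-((σ + 1) * (1 - r) ^ σ)))
      (𝓝[<] (1:ℝ)) (𝓝 (L / (σ + 1))) := by
    have hr1 : Tendsto (fun r : ℝ => r) (𝓝[<] (1:ℝ)) (𝓝 1) :=
      tendsto_id.mono_left (nhdsWithin_le_nhds (s := Iio (1:ℝ)))
    have h2 : Tendsto (fun r : ℝ => r * ((1 - r) ^ (-σ) * ρ r) / (σ + 1))
        (𝓝[<] (1:ℝ)) (𝓝 (1 * L / (σ + 1))) := (hr1.mul hlim).div_const (σ + 1)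
    rw [one_mul] at h2
    apply h2.congr'
    filter_upwards [self_mem_nhdsWithin] with r hr
    have ht : (0:ℝ) < 1 - r := by simp only [mem_Iio] at hr; linarith
    have htσ : (0:ℝ) < (1 - r) ^ σ := Real.rpow_pos_of_pos ht σ
    rw [neg_div_neg_eq, Real.rpow_neg ht.le,
      div_eq_div_iff (by positivity : (σ + 1 : ℝ) ≠ 0)
        (by positivity : ((σ + 1) * (1 - r) ^ σ : ℝ) ≠ 0)]
    field_simp
  have key : Tendsto (fun r => f r / (1 - r) ^ (σ + 1)) (𝓝[<] (1:ℝ))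
      (𝓝 (L / (σ + 1))) :=
    HasDerivAt.lhopital_zero_nhdsLT hff' hgg' hg'ne hfa hga hdiv
  -- limit of the weight
  have hW : Tendsto (fun r => ((1 - r) ^ (-σ) * ρ r) ^ (-γ)) (𝓝[<] (1:ℝ))
      (𝓝 (L ^ (-γ))) :=
    ((Real.continuousAt_rpow_const L (-γ) (Or.inl hL.ne')).tendsto).comp hlim
  set K : ℝ := δ * (L / (σ + 1)) * L ^ (-γ) with hKdef
  have hKpos : 0 < K := by
    have h1 := Real.rpow_pos_of_pos hL (-γ)
    have h2 : (0:ℝ) < L / (σ + 1) := by positivity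
    positivity
  have hG : Tendsto (fun r => δ * (f r / (1 - r) ^ (σ + 1)) * ((1 - r) ^ (-σ) * ρ r) ^ (-γ))
      (𝓝[<] (1:ℝ)) (𝓝 K) := (key.const_mul δ).mul hW
  -- eventual identity for E
  have hEeq : ∀ r ∈ Ioo (0:ℝ) 1, E r =
      δ * (f r / (1 - r) ^ (σ + 1)) * ((1 - r) ^ (-σ) * ρ r) ^ (-γ)
        * (1 - r) ^ (1 - σ * (γ - 1)) := by
    intro r hr
    rw [hE r ⟨hr.1.le, hr.2⟩]
    simp only [hfdef]
    have ht : (0:ℝ) < 1 - r := by linarith [hr.2]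
    have ha : 0 < ρ r := hpos r ⟨hr.1.le, hr.2⟩
    have haγ : (0:ℝ) < ρ r ^ γ := Real.rpow_pos_of_pos ha γ
    have hT : (0:ℝ) < (1 - r) ^ (σ + 1) := Real.rpow_pos_of_pos ht (σ + 1)
    rw [Real.mul_rpow (Real.rpow_nonneg ht.le _) ha.le, ← Real.rpow_mul ht.le,
      Real.rpow_neg ha.le γ]
    have hcomb : (1 - r) ^ (-σ * -γ) * (1 - r) ^ (1 - σ * (γ - 1))
        = (1 - r) ^ (σ + 1) := by
      rw [← Real.rpow_add ht]; congr 1; ring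
    have h5 : δ * ((∫ ℓ in r..1, ℓ * ρ ℓ) / (1 - r) ^ (σ + 1))
          * ((1 - r) ^ (-σ * -γ) * (ρ r ^ γ)⁻¹) * (1 - r) ^ (1 - σ * (γ - 1))
        = δ * (∫ ℓ in r..1, ℓ * ρ ℓ) * (ρ r ^ γ)⁻¹
          * (((1 - r) ^ (-σ * -γ) * (1 - r) ^ (1 - σ * (γ - 1))) / (1 - r) ^ (σ + 1)) := by
      ring
    rw [h5, hcomb, div_self hT.ne', mul_one, ← div_eq_mul_inv]
  have hEev : E =ᶠ[𝓝[<] (1:ℝ)] fun r =>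
      δ * (f r / (1 - r) ^ (σ + 1)) * ((1 - r) ^ (-σ) * ρ r) ^ (-γ)
        * (1 - r) ^ (1 - σ * (γ - 1)) := by
    filter_upwards [h01] with r hr
    exact hEeq r hr
  refine ⟨hEpos, ?_, ?_, ?_⟩
  · -- supercritical : limit is +∞
    intro hc
    have hpow : Tendsto (fun r : ℝ => (1 - r) ^ (1 - σ * (γ - 1))) (𝓝[<] (1:ℝ)) atTop := by
      have h1 : Tendsto (fun r : ℝ => (1 - r) ^ (-(1 - σ * (γ - 1)))) (𝓝[<] (1:ℝ))
          (𝓝[>] 0) := by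
        apply tendsto_nhdsWithin_of_tendsto_nhds_of_eventually_within
        · exact hto0 _ (by linarith)
        · filter_upwards [self_mem_nhdsWithin] with r hr
          have ht : (0:ℝ) < 1 - r := by simp only [mem_Iio] at hr; linarith
          exact Real.rpow_pos_of_pos ht _
      have h2 := h1.inv_tendsto_nhdsGT_zero
      apply h2.congr'
      filter_upwards [self_mem_nhdsWithin] with r hr
      have ht : (0:ℝ) < 1 - r := by simp only [mem_Iio] at hr; linarith
      rw [Pi.inv_apply, ← Real.rpow_neg ht.le, neg_neg]
    exact (Tendsto.pos_mul_atTop hKpos hG hpow).congr' hEev.symm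
  · -- critical : finite nonzero limit
    intro hc
    have hσγ : σ * γ = σ + 1 := by nlinarith [hc]
    have h0 : 1 - σ * (γ - 1) = 0 := by linarith
    have hTK : Tendsto E (𝓝[<] (1:ℝ)) (𝓝 K) := by
      apply hG.congr'
      filter_upwards [h01] with r hr
      rw [hEeq r hr, h0, Real.rpow_zero, mul_one]
    have hval : δ * L ^ (1 - γ) / (σ * γ) = K := by
      rw [hσγ, show (1:ℝ) - γ = 1 + -γ by ring, Real.rpow_add hL, Real.rpow_one, hKdef]
      ring
    rw [← hval] at hTK
    exact hTK
  · -- subcritical : limit is 0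
    intro hc
    have h1 := hG.mul (hto0 (1 - σ * (γ - 1)) (by linarith))
    rw [mul_zero] at h1
    exact h1.congr' hEev.symm
end

section
/- Let $\gamma > 1$, $\delta > 0$, $k \in \mathbb{Z}_{\geq 0}$, and let $\phi \in C^k([0,1])$ with $\phi > 0$ on $[0,1]$. Define $E(r) = \frac{\delta \int_r^1 \ell\, \phi(\ell) (1-\ell)^{1/(\gamma-1)} \, d\ell}{(1-r)^{\gamma/(\gamma-1)} \phi(r)^{\gamma}}$ for $r \in [0,1)$. Then $E$ extends to a function in $C^k([0,1])$, and moreover there exist constants $0 < c \leq C$ such that $c \leq E(r) \leq C$ for all $r \in [0,1]$, and $|(d/dr)^j E(r)| \leq C$ for all $1 \leq j \leq k$ and $r \in [0,1]$. -/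
open Set intervalIntegral
open MeasureTheory

theorem ckExtend : ∀ (k : ℕ) (f : ℝ → ℝ), ContDiffOn ℝ k f (Icc 0 1) →
    ∃ g : ℝ → ℝ, ContDiff ℝ k g ∧ EqOn g f (Icc 0 1) := by
  intro k
  induction k with
  | zero =>
    intro f hf
    refine ⟨f ∘ (fun x => max 0 (min 1 x)), ?_, ?_⟩
    · rw [Nat.cast_zero, contDiff_zero]
      refine (contDiffOn_zero.mp (by rwa [Nat.cast_zero] at hf)).comp_continuous
        (continuous_const.max (continuous_const.min continuous_id)) fun x => ?_
      exact ⟨le_max_left _ _, max_le (by norm_num) (min_le_left _ _)⟩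
    · intro x hx
      simp only [Function.comp_apply, min_eq_right hx.2, max_eq_right hx.1]
  | succ k ih =>
    intro f hf
    have hu : UniqueDiffOn ℝ (Icc (0:ℝ) 1) := uniqueDiffOn_Icc zero_lt_one
    have hf' : ContDiffOn ℝ k (derivWithin f (Icc 0 1)) (Icc 0 1) :=
      hf.derivWithin hu (by exact_mod_cast le_rfl)
    obtain ⟨g₁, hg₁, hg₁e⟩ := ih _ hf'
    set g : ℝ → ℝ := fun x => f 0 + ∫ t in (0:ℝ)..x, g₁ t with hgdef
    have hd : ∀ x : ℝ, HasDerivAt g (g₁ x) x := by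
      intro x
      have := intervalIntegral.integral_hasDerivAt_right
        (hg₁.continuous.intervalIntegrable 0 x)
        (hg₁.continuous.stronglyMeasurableAtFilter _ _)
        hg₁.continuous.continuousAt
      exact this.const_add (f 0)
    refine ⟨g, ?_, ?_⟩
    · have hcast : ((k+1:ℕ) : WithTop ℕ∞) = (k : WithTop ℕ∞) + 1 := by push_cast; ring
      rw [hcast, contDiff_succ_iff_deriv]
      refine ⟨fun x => (hd x).differentiableAt, by simp, ?_⟩
      have : deriv g = g₁ := funext fun x => (hd x).deriv
      rw [this]; exact hg₁
    · intro x hx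
      have h0x : (0:ℝ) ≤ x := hx.1
      have hsub : Icc (0:ℝ) x ⊆ Icc 0 1 := Icc_subset_Icc le_rfl hx.2
      have hint : ∫ t in (0:ℝ)..x, g₁ t = f x - f 0 := by
        rw [intervalIntegral.integral_congr (g := derivWithin f (Icc 0 1))
          (fun t ht => hg₁e (hsub (by rwa [uIcc_of_le h0x] at ht)))]
        refine intervalIntegral.integral_eq_sub_of_hasDeriv_right_of_le h0x
          (hf.continuousOn.mono hsub) (fun t ht => ?_) ?_
        · have htm : Icc (0:ℝ) 1 ∈ nhds t := Icc_mem_nhds ht.1 (ht.2.trans_le hx.2)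
          have hdiff : DifferentiableWithinAt ℝ f (Icc 0 1) t :=
            hf.differentiableOn (by simp) t (hsub (Ioo_subset_Icc_self ht))
          exact ((hdiff.hasDerivWithinAt.hasDerivAt htm)).hasDerivWithinAt
        · exact ((hf'.continuousOn.mono hsub).mono (by rw [uIcc_of_le h0x])).intervalIntegrable
      simp only [hgdef, hint]; ring

theorem paramCD : ∀ (m : ℕ) (τ : ℝ), 0 < τ → ∀ (h : ℝ → ℝ), ContDiff ℝ m h →
    ContDiff ℝ m (fun s => ∫ t in (0:ℝ)..1, h (s * t) * t ^ τ) := by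
  intro m
  induction m with
  | zero =>
    intro τ hτ h hh
    rw [Nat.cast_zero, contDiff_zero]
    have hrpow : Continuous fun t : ℝ => t ^ τ :=
      continuous_iff_continuousAt.mpr fun x => Real.continuousAt_rpow_const x τ (Or.inr hτ.le)
    have hcont : Continuous (Function.uncurry fun (s t : ℝ) => h (s * t) * t ^ τ) :=
      ((hh.continuous.comp (continuous_fst.mul continuous_snd)).mul
        (hrpow.comp continuous_snd))
    exact intervalIntegral.continuous_parametric_intervalIntegral_of_continuous' hcont 0 1
  | succ m ih =>
    intro τ hτ h hh
    have hcast : ((m+1:ℕ) : WithTop ℕ∞) = (m : WithTop ℕ∞) + 1 := by push_cast; ring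
    rw [hcast] at hh ⊢
    rw [contDiff_succ_iff_deriv] at hh
    obtain ⟨hdiff, -, hh'⟩ := hh
    have hrpow : Continuous fun t : ℝ => t ^ τ :=
      continuous_iff_continuousAt.mpr fun x => Real.continuousAt_rpow_const x τ (Or.inr hτ.le)
    have hFc : ∀ x : ℝ, Continuous fun t => h (x * t) * t ^ τ := fun x =>
      (hdiff.continuous.comp (continuous_const.mul continuous_id)).mul hrpow
    have hF'c : ∀ x : ℝ, Continuous fun t : ℝ => (deriv h (x * t) * t) * t ^ τ := fun x =>
      ((hh'.continuous.comp (continuous_const.mul continuous_id)).mul continuous_id).mul hrpow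
    have key : ∀ s₀ : ℝ, HasDerivAt (fun s => ∫ t in (0:ℝ)..1, h (s * t) * t ^ τ)
        (∫ t in (0:ℝ)..1, deriv h (s₀ * t) * t ^ (τ+1)) s₀ := by
      intro s₀
      obtain ⟨M, hM⟩ := isCompact_Icc.exists_bound_of_continuousOn
        (s := Icc (-(|s₀|+1)) (|s₀|+1)) hh'.continuous.continuousOn
      have harg : ∀ x ∈ Metric.ball s₀ 1, ∀ t ∈ Set.uIoc (0:ℝ) 1,
          x * t ∈ Icc (-(|s₀|+1)) (|s₀|+1) := by
        intro x hx t ht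
        rw [Set.uIoc_of_le zero_le_one] at ht
        have hxb : |x| ≤ |s₀| + 1 := by
          have h1 := abs_sub_abs_le_abs_sub x s₀
          have h2 : |x - s₀| < 1 := by simpa [Real.dist_eq] using hx
          linarith
        have : |x * t| ≤ |s₀| + 1 := by
          rw [abs_mul]
          calc |x| * |t| ≤ (|s₀|+1) * 1 := by
                apply mul_le_mul hxb _ (abs_nonneg t) (by positivity)
                rw [abs_of_pos ht.1]; exact ht.2
            _ = |s₀| + 1 := mul_one _
        exact abs_le.mp this
      have hb : ∀ᵐ t ∂(volume : Measure ℝ), t ∈ Set.uIoc (0:ℝ) 1 → ∀ x ∈ Metric.ball s₀ 1,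
          ‖(deriv h (x*t)*t)*t^τ‖ ≤ |M| := by
        refine Filter.Eventually.of_forall fun t ht x hx => ?_
        have h1 := hM _ (harg x hx t ht)
        rw [Set.uIoc_of_le zero_le_one] at ht
        have ht0 : 0 < t := ht.1
        have htτ : t ^ τ ≤ 1 := Real.rpow_le_one ht0.le ht.2 hτ.le
        have htτ0 : 0 ≤ t ^ τ := Real.rpow_nonneg ht0.le τ
        have heq : ‖(deriv h (x*t)*t)*t^τ‖ = ‖deriv h (x*t)‖ * t * t^τ := by
          simp [Real.norm_eq_abs, abs_mul, abs_of_pos ht0, abs_of_nonneg htτ0]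
        rw [heq]
        calc ‖deriv h (x*t)‖ * t * t^τ ≤ |M| * 1 * 1 := by
              apply mul_le_mul _ htτ htτ0 (by positivity)
              exact mul_le_mul (h1.trans (le_abs_self M)) ht.2 ht0.le (abs_nonneg M)
          _ = |M| := by ring
      have hdall : ∀ᵐ t ∂(volume : Measure ℝ), t ∈ Set.uIoc (0:ℝ) 1 → ∀ x ∈ Metric.ball s₀ 1,
          HasDerivAt (fun x => h (x*t) * t^τ) ((deriv h (x*t)*t)*t^τ) x := by
        refine Filter.Eventually.of_forall fun t _ x _ => ?_
        have h1 : HasDerivAt (fun x : ℝ => x * t) t x := by simpa using (hasDerivAt_id x).mul_const t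
        have h2 : HasDerivAt h (deriv h (x*t)) (x*t) := (hdiff (x*t)).hasDerivAt
        exact (h2.comp x h1).mul_const _
      have hres := (intervalIntegral.hasDerivAt_integral_of_dominated_loc_of_deriv_le (Metric.ball_mem_nhds s₀ zero_lt_one)
        (Filter.Eventually.of_forall fun x => (hFc x).aestronglyMeasurable)
        ((hFc s₀).intervalIntegrable 0 1) (hF'c s₀).aestronglyMeasurable hb
        intervalIntegrable_const hdall).2
      refine hres.congr_deriv ?_
      apply intervalIntegral.integral_congr
      intro t ht
      rw [Set.uIcc_of_le zero_le_one] at ht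
      rcases eq_or_lt_of_le ht.1 with h0 | h0
      · simp [← h0, Real.zero_rpow (by positivity : τ + 1 ≠ 0)]
      · simp only []
        rw [Real.rpow_add_one (ne_of_gt h0)]
        ring
    rw [contDiff_succ_iff_deriv]
    refine ⟨fun s => (key s).differentiableAt, by simp, ?_⟩
    have hde : deriv (fun s => ∫ t in (0:ℝ)..1, h (s*t) * t^τ)
        = fun s => ∫ t in (0:ℝ)..1, deriv h (s*t) * t^(τ+1) := funext fun s => (key s).deriv
    rw [hde]
    exact ih (τ+1) (by linarith) (deriv h) hh'

theorem entropy_Ck_regularity_and_bounds (γ δ : ℝ) (hγ : 1 < γ) (hδ : 0 < δ) (k : ℕ)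
    (φ : ℝ → ℝ) (hφ : ContDiffOn ℝ k φ (Icc 0 1))
    (hφpos : ∀ r ∈ Icc (0:ℝ) 1, 0 < φ r)
    (E : ℝ → ℝ)
    (hE : ∀ r ∈ Ico (0:ℝ) 1,
      E r = δ * (∫ ℓ in r..1, ℓ * φ ℓ * (1 - ℓ) ^ (1/(γ-1)))
              / ((1 - r) ^ (γ/(γ-1)) * (φ r) ^ γ)) :
    ∃ F : ℝ → ℝ, ContDiffOn ℝ k F (Icc 0 1) ∧ (∀ r ∈ Ico (0:ℝ) 1, F r = E r) ∧
      ∃ c C : ℝ, 0 < c ∧ c ≤ C ∧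
        (∀ r ∈ Icc (0:ℝ) 1, c ≤ F r ∧ F r ≤ C) ∧
        (∀ j : ℕ, 1 ≤ j → j ≤ k → ∀ r ∈ Icc (0:ℝ) 1,
          |iteratedDerivWithin j F (Icc 0 1) r| ≤ C) := by
  have hγ1 : (0:ℝ) < γ - 1 := by linarith
  set σ : ℝ := 1/(γ-1) with hσdef
  have hσ : 0 < σ := by positivity
  -- the composed function u ↦ (1-u) φ(1-u) is C^k on [0,1]
  have hmaps : MapsTo (fun u : ℝ => 1 - u) (Icc 0 1) (Icc 0 1) := by
    intro u hu
    simp only [mem_Icc] at hu ⊢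
    constructor <;> linarith [hu.1, hu.2]
  have hh : ContDiffOn ℝ k (fun u : ℝ => (1-u) * φ (1-u)) (Icc 0 1) := by
    have h1 : ContDiffOn ℝ k (fun u : ℝ => φ (1-u)) (Icc 0 1) :=
      hφ.comp ((contDiff_const.sub contDiff_id).contDiffOn) hmaps
    exact ((contDiff_const.sub contDiff_id).contDiffOn).mul h1
  obtain ⟨g, hg, hge⟩ := ckExtend k _ hh
  set Φ : ℝ → ℝ := fun s => ∫ t in (0:ℝ)..1, g (s * t) * t ^ σ with hΦdef
  have hΦ : ContDiff ℝ k Φ := paramCD k σ hσ g hg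
  set F : ℝ → ℝ := fun r => δ * Φ (1-r) / (φ r) ^ γ with hFdef
  have hφne : ∀ x ∈ Icc (0:ℝ) 1, (φ x) ^ γ ≠ 0 :=
    fun x hx => (Real.rpow_pos_of_pos (hφpos x hx) γ).ne'
  have hFcd : ContDiffOn ℝ k F (Icc 0 1) := by
    apply ContDiffOn.div
    · exact (contDiff_const.mul (hΦ.comp (contDiff_const.sub contDiff_id))).contDiffOn
    · exact hφ.rpow_const_of_ne (fun x hx => (hφpos x hx).ne')
    · exact hφne
  -- positivity of Φ on [0,1]
  have hΦpos : ∀ s ∈ Icc (0:ℝ) 1, 0 < Φ s := by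
    rintro s ⟨hs0, hs1⟩
    apply intervalIntegral.intervalIntegral_pos_of_pos_on _ _ zero_lt_one
    · refine Continuous.intervalIntegrable ?_ 0 1
      exact (hg.continuous.comp (continuous_const.mul continuous_id)).mul
        (continuous_iff_continuousAt.mpr fun x => Real.continuousAt_rpow_const x σ (Or.inr hσ.le))
    · rintro t ⟨ht0, ht1⟩
      have h1 : 0 ≤ s * t := mul_nonneg hs0 ht0.le
      have h2 : s * t ≤ t := by nlinarith
      have hst : s * t ∈ Icc (0:ℝ) 1 := ⟨h1, by linarith⟩
      rw [hge hst]
      have h3 : (0:ℝ) < 1 - s*t := by linarith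
      have h4 : (1 - s*t) ∈ Icc (0:ℝ) 1 := ⟨h3.le, by linarith⟩
      exact mul_pos (mul_pos h3 (hφpos _ h4)) (Real.rpow_pos_of_pos ht0 σ)
  have hFpos : ∀ r ∈ Icc (0:ℝ) 1, 0 < F r := by
    intro r hr
    have h1 : (1-r) ∈ Icc (0:ℝ) 1 := hmaps hr
    exact div_pos (mul_pos hδ (hΦpos _ h1)) (Real.rpow_pos_of_pos (hφpos r hr) γ)
  -- F agrees with E on [0,1)
  have hFE : ∀ r ∈ Ico (0:ℝ) 1, F r = E r := by
    intro r hr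
    set s : ℝ := 1 - r with hs
    have hs0 : 0 < s := by simp only [hs]; linarith [hr.2]
    have hs1 : s ≤ 1 := by simp only [hs]; linarith [hr.1]
    have hrI : r ∈ Icc (0:ℝ) 1 := ⟨hr.1, hr.2.le⟩
    -- step A: substitution ℓ = 1 - u
    have stepA : (∫ ℓ in r..1, ℓ * φ ℓ * (1 - ℓ) ^ σ)
        = ∫ u in (0:ℝ)..s, (1-u) * φ (1-u) * u ^ σ := by
      have : (∫ ℓ in r..1, ℓ * φ ℓ * (1 - ℓ) ^ σ)
          = ∫ ℓ in r..1, (fun u => (1-u) * φ (1-u) * u ^ σ) (1 - ℓ) := by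
        apply intervalIntegral.integral_congr
        intro ℓ _
        simp [sub_sub_cancel]
      rw [this, intervalIntegral.integral_comp_sub_left (fun u => (1-u) * φ (1-u) * u ^ σ) 1]
      norm_num
      rfl
    -- step B: replace by extension g
    have stepB : (∫ u in (0:ℝ)..s, (1-u) * φ (1-u) * u ^ σ)
        = ∫ u in (0:ℝ)..s, g u * u ^ σ := by
      apply intervalIntegral.integral_congr
      intro u hu
      rw [Set.uIcc_of_le hs0.le] at hu
      show (1-u) * φ (1-u) * u ^ σ = g u * u ^ σ
      rw [hge ⟨hu.1, hu.2.trans hs1⟩]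
    -- step C: scaling u = s t
    have stepC : (∫ u in (0:ℝ)..s, g u * u ^ σ) = s ^ (σ+1) * Φ s := by
      have h1 := intervalIntegral.integral_comp_mul_left (a := (0:ℝ)) (b := (1:ℝ)) (c := s)
        (fun u => g u * u ^ σ) hs0.ne'
      have h2 : (∫ t in (0:ℝ)..1, g (s*t) * (s*t) ^ σ) = s ^ σ * Φ s := by
        have : (∫ t in (0:ℝ)..1, g (s*t) * (s*t) ^ σ)
            = ∫ t in (0:ℝ)..1, s ^ σ * (g (s*t) * t ^ σ) := by
          apply intervalIntegral.integral_congr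
          intro t ht
          rw [Set.uIcc_of_le zero_le_one] at ht
          show g (s*t) * (s*t) ^ σ = s ^ σ * (g (s*t) * t ^ σ)
          rw [Real.mul_rpow hs0.le ht.1]
          ring
        rw [this, intervalIntegral.integral_const_mul]
      simp only [mul_zero, mul_one, smul_eq_mul] at h1
      have h3 : (∫ u in (0:ℝ)..s, g u * u ^ σ) = s * (s ^ σ * Φ s) := by
        rw [← h2, h1]
        field_simp
      rw [h3, Real.rpow_add_one hs0.ne' σ]
      ring
    have hexp : γ/(γ-1) = σ + 1 := by
      rw [hσdef]; field_simp; ring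
    rw [hE r hr, hexp, ← hs]
    have hEint : (∫ ℓ in r..1, ℓ * φ ℓ * (1 - ℓ) ^ (1/(γ-1))) = s ^ (σ+1) * Φ s := by
      rw [← hσdef, stepA, stepB, stepC]
    rw [hEint]
    have hA : s ^ (σ+1) ≠ 0 := (Real.rpow_pos_of_pos hs0 _).ne'
    have hB : (φ r) ^ γ ≠ 0 := hφne r hrI
    rw [hFdef]
    field_simp
    ring
  -- bounds
  have hu : UniqueDiffOn ℝ (Icc (0:ℝ) 1) := uniqueDiffOn_Icc zero_lt_one
  have hFcont : ContinuousOn F (Icc 0 1) := hFcd.continuousOn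
  obtain ⟨xm, hxm, hxmle⟩ := isCompact_Icc.exists_isMinOn (nonempty_Icc.mpr zero_le_one) hFcont
  obtain ⟨xM, hxM, hxMge⟩ := isCompact_Icc.exists_isMaxOn (nonempty_Icc.mpr zero_le_one) hFcont
  have hbd : ∀ j : ℕ, ∃ Cj : ℝ, j ≤ k → ∀ r ∈ Icc (0:ℝ) 1,
      |iteratedDerivWithin j F (Icc 0 1) r| ≤ Cj := by
    intro j
    by_cases hj : j ≤ k
    · obtain ⟨Cj, hCj⟩ := isCompact_Icc.exists_bound_of_continuousOn
        (hFcd.continuousOn_iteratedDerivWithin (by exact_mod_cast hj) hu)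
      exact ⟨Cj, fun _ r hr => by rw [← Real.norm_eq_abs]; exact hCj r hr⟩
    · exact ⟨0, fun h => absurd h hj⟩
  choose Cf hCf using hbd
  set C : ℝ := max (F xM) ((Finset.range (k+1)).sup' ⟨0, Finset.mem_range.mpr (Nat.succ_pos k)⟩ Cf)
    with hCdef
  refine ⟨F, hFcd, hFE, F xm, C, hFpos xm hxm, ?_, ?_, ?_⟩
  · calc F xm ≤ F xM := hxmle hxM
      _ ≤ C := le_max_left _ _
  · intro r hr
    exact ⟨hxmle hr, (hxMge hr).trans (le_max_left _ _)⟩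
  · intro j hj1 hjk r hr
    calc |iteratedDerivWithin j F (Icc 0 1) r| ≤ Cf j := hCf j hjk r hr
      _ ≤ (Finset.range (k+1)).sup' _ Cf :=
          Finset.le_sup' Cf (Finset.mem_range.mpr (Nat.lt_succ_of_le hjk))
      _ ≤ C := le_max_right _ _
end
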